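/- Let X be a smooth vertical vector field on M and let Y_H and Z_H be the horizontal lifts of smooth vector fields Y and Z on B. Then 2·⟪∇^M_X Y_H, Z_H⟫ = −⟪[Y_H, Z_H], X⟫ as functions on M. -/

import Mathlib

open Manifold

noncomputable section

/-- A vector field on a manifold is smooth if the corresponding section of the
tangent bundle is smooth. -/
def IsSmoothVF {E : Type*} [NormedAddCommGroup E] [NormedSpace ℝ E]
    {H : Type*} [TopologicalSpace H] (I : ModelWithCorners ℝ E H)
    {M : Type*} [TopologicalSpace M] [ChartedSpace H M] [IsManifold I (⊤ : ℕ∞) M]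
    (X : ∀ m : M, TangentSpace I m) : Prop :=
  ContMDiff I I.tangent (⊤ : ℕ∞) (fun m => (⟨m, X m⟩ : TangentBundle I M))

/-- The action of a vector field on a function: `X(f)(m) := df_m(X_m)`. -/
def vfApply {E : Type*} [NormedAddCommGroup E] [NormedSpace ℝ E]
    {H : Type*} [TopologicalSpace H] (I : ModelWithCorners ℝ E H)
    {M : Type*} [TopologicalSpace M] [ChartedSpace H M]
    (X : ∀ m : M, TangentSpace I m) (f : M → ℝ) : M → ℝ :=
  fun m => mfderiv I 𝓘(ℝ, ℝ) f m (X m)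

/-- A Riemannian metric: a smoothly varying family of real inner products on the
tangent spaces. -/
structure RiemannianMetric {E : Type*} [NormedAddCommGroup E] [NormedSpace ℝ E]
    {H : Type*} [TopologicalSpace H] (I : ModelWithCorners ℝ E H)
    (M : Type*) [TopologicalSpace M] [ChartedSpace H M] [IsManifold I (⊤ : ℕ∞) M] where
  g : ∀ m : M, TangentSpace I m → TangentSpace I m → ℝ
  symm : ∀ m u v, g m u v = g m v u
  add_left : ∀ m u v w, g m (u + v) w = g m u w + g m v w
  smul_left : ∀ (m) (c : ℝ) (u w), g m (c • u) w = c * g m u w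
  posdef : ∀ m v, v ≠ 0 → 0 < g m v v
  smooth : ∀ X Y : ∀ m : M, TangentSpace I m, IsSmoothVF I X → IsSmoothVF I Y →
    ContMDiff I 𝓘(ℝ, ℝ) (⊤ : ℕ∞) (fun m => g m (X m) (Y m))

/-- The Lie bracket of smooth vector fields, characterized by
`[X,Y](f) = X(Y(f)) - Y(X(f))` on smooth functions. -/
structure LieBracketData {E : Type*} [NormedAddCommGroup E] [NormedSpace ℝ E]
    {H : Type*} [TopologicalSpace H] (I : ModelWithCorners ℝ E H)
    (M : Type*) [TopologicalSpace M] [ChartedSpace H M] [IsManifold I (⊤ : ℕ∞) M] where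
  bracket : (∀ m : M, TangentSpace I m) → (∀ m : M, TangentSpace I m) →
    (∀ m : M, TangentSpace I m)
  smooth : ∀ X Y, IsSmoothVF I X → IsSmoothVF I Y → IsSmoothVF I (bracket X Y)
  apply_eq : ∀ X Y, IsSmoothVF I X → IsSmoothVF I Y →
    ∀ f : M → ℝ, ContMDiff I 𝓘(ℝ, ℝ) (⊤ : ℕ∞) f → ∀ m,
      vfApply I (bracket X Y) f m =
        vfApply I X (vfApply I Y f) m - vfApply I Y (vfApply I X f) m

/-- The Levi-Civita connection associated to a Riemannian metric: an ℝ-bilinear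
operator on smooth vector fields, `C^∞`-linear in the first slot, satisfying the
Leibniz rule, metric, and torsion-free. -/
structure LeviCivita {E : Type*} [NormedAddCommGroup E] [NormedSpace ℝ E]
    {H : Type*} [TopologicalSpace H] {I : ModelWithCorners ℝ E H}
    {M : Type*} [TopologicalSpace M] [ChartedSpace H M] [IsManifold I (⊤ : ℕ∞) M]
    (gM : RiemannianMetric I M) (lie : LieBracketData I M) where
  cov : (∀ m : M, TangentSpace I m) → (∀ m : M, TangentSpace I m) →
    (∀ m : M, TangentSpace I m)
  smooth : ∀ X Y, IsSmoothVF I X → IsSmoothVF I Y → IsSmoothVF I (cov X Y)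
  add_left : ∀ X X' Y, IsSmoothVF I X → IsSmoothVF I X' → IsSmoothVF I Y → ∀ m,
    cov (fun m => X m + X' m) Y m = cov X Y m + cov X' Y m
  add_right : ∀ X Y Y', IsSmoothVF I X → IsSmoothVF I Y → IsSmoothVF I Y' → ∀ m,
    cov X (fun m => Y m + Y' m) m = cov X Y m + cov X Y' m
  smul_left : ∀ (c : ℝ) (X Y), IsSmoothVF I X → IsSmoothVF I Y → ∀ m,
    cov (fun m => c • X m) Y m = c • cov X Y m
  smul_right : ∀ (c : ℝ) (X Y), IsSmoothVF I X → IsSmoothVF I Y → ∀ m,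
    cov X (fun m => c • Y m) m = c • cov X Y m
  cinf_linear : ∀ (f : M → ℝ), ContMDiff I 𝓘(ℝ, ℝ) (⊤ : ℕ∞) f →
    ∀ X Y, IsSmoothVF I X → IsSmoothVF I Y → ∀ m,
      cov (fun m => f m • X m) Y m = f m • cov X Y m
  leibniz : ∀ (f : M → ℝ), ContMDiff I 𝓘(ℝ, ℝ) (⊤ : ℕ∞) f →
    ∀ X Y, IsSmoothVF I X → IsSmoothVF I Y → ∀ m,
      cov X (fun m => f m • Y m) m = vfApply I X f m • Y m + f m • cov X Y m
  metric : ∀ X Y Z, IsSmoothVF I X → IsSmoothVF I Y → IsSmoothVF I Z → ∀ m,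
    vfApply I X (fun m => gM.g m (Y m) (Z m)) m =
      gM.g m (cov X Y m) (Z m) + gM.g m (Y m) (cov X Z m)
  torsion_free : ∀ X Y, IsSmoothVF I X → IsSmoothVF I Y → ∀ m,
    cov X Y m - cov Y X m = lie.bracket X Y m

section Submersion

variable {EM : Type*} [NormedAddCommGroup EM] [NormedSpace ℝ EM]
  {HM : Type*} [TopologicalSpace HM] (IM : ModelWithCorners ℝ EM HM)
  {M : Type*} [TopologicalSpace M] [ChartedSpace HM M]
  {EB : Type*} [NormedAddCommGroup EB] [NormedSpace ℝ EB]
  {HB : Type*} [TopologicalSpace HB] (IB : ModelWithCorners ℝ EB HB)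
  {B : Type*} [TopologicalSpace B] [ChartedSpace HB B]

/-- A vector field on `M` is vertical when `dπ_m(X_m) = 0` for all `m`. -/
def IsVerticalVF (π : M → B) (X : ∀ m : M, TangentSpace IM m) : Prop :=
  ∀ m : M, mfderiv IM IB π m (X m) = 0

section
variable [IsManifold IM (⊤ : ℕ∞) M]

/-- A vector field on `M` is horizontal when it is pointwise `g`-orthogonal to the
kernel of `dπ`. -/
def IsHorizontalVF (π : M → B) (gM : RiemannianMetric IM M)
    (X : ∀ m : M, TangentSpace IM m) : Prop :=
  ∀ (m : M) (u : TangentSpace IM m), mfderiv IM IB π m u = 0 → gM.g m (X m) u = 0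

/-- `π : M → B` is a Riemannian submersion: it is smooth, surjective, each
differential `dπ_m` is surjective and restricts to a linear isometry from
`(ker dπ_m)^⊥` onto `T_{π m} B`. -/
structure IsRiemannianSubmersion [IsManifold IB (⊤ : ℕ∞) B] (π : M → B)
    (gM : RiemannianMetric IM M) (gB : RiemannianMetric IB B) : Prop where
  smooth : ContMDiff IM IB (⊤ : ℕ∞) π
  surj : Function.Surjective π
  dsurj : ∀ m : M, Function.Surjective (mfderiv IM IB π m)
  isometry : ∀ (m : M) (v w : TangentSpace IM m),
    (∀ u : TangentSpace IM m, mfderiv IM IB π m u = 0 → gM.g m v u = 0) →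
    (∀ u : TangentSpace IM m, mfderiv IM IB π m u = 0 → gM.g m w u = 0) →
    gB.g (π m) (mfderiv IM IB π m v) (mfderiv IM IB π m w) = gM.g m v w

/-- `YH` is the horizontal lift of the vector field `Y` on `B`: it is smooth,
horizontal and satisfies `dπ_m((Y_H)_m) = Y_{π m}` for all `m`. -/
def IsHorizontalLift (π : M → B) (gM : RiemannianMetric IM M)
    (Y : ∀ b : B, TangentSpace IB b) (YH : ∀ m : M, TangentSpace IM m) : Prop :=
  IsSmoothVF IM YH ∧ IsHorizontalVF IM IB π gM YH ∧
    ∀ m : M, mfderiv IM IB π m (YH m) = Y (π m)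

end

end Submersion

/-!
By the Koszul formula, `2⟪∇_X Y_H, Z_H⟫` is `X⟪Y_H, Z_H⟫ + Y_H⟪X, Z_H⟫ - Z_H⟪X, Y_H⟫` plus
`⟪[X, Y_H], Z_H⟫ - ⟪[X, Z_H], Y_H⟫ - ⟪[Y_H, Z_H], X⟫`. Every term but the last vanishes:
`⟪Y_H, Z_H⟫ = ⟪Y, Z⟫ ∘ π` is constant along the vertical `X`, vertical and horizontal fields are
orthogonal, and `[X, Y_H]`, `[X, Z_H]` are vertical because `X` is `π`-related to `0` and the
lifts to `Y` and `Z`.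
-/

section VectorFieldCalculus

variable {E : Type*} [NormedAddCommGroup E] [NormedSpace ℝ E]
  {H : Type*} [TopologicalSpace H] {I : ModelWithCorners ℝ E H}
  {M : Type*} [TopologicalSpace M] [ChartedSpace H M]

theorem vfApply_zero (X : ∀ m : M, TangentSpace I m) : vfApply I X 0 = 0 := by
  funext m
  show mfderiv I 𝓘(ℝ, ℝ) (fun _ : M => (0 : ℝ)) m (X m) = 0
  rw [mfderiv_const]
  rfl

theorem contMDiff_vfApply [IsManifold I (⊤ : ℕ∞) M] {X : ∀ m : M, TangentSpace I m}
    (hX : IsSmoothVF I X) {f : M → ℝ} (hf : ContMDiff I 𝓘(ℝ, ℝ) (⊤ : ℕ∞) f) :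
    ContMDiff I 𝓘(ℝ, ℝ) (⊤ : ℕ∞) (vfApply I X f) :=
  (contMDiff_snd_tangentBundle_modelSpace ℝ 𝓘(ℝ, ℝ)).comp
    ((hf.contMDiff_tangentMap le_rfl).comp hX)

variable {E' : Type*} [NormedAddCommGroup E'] [NormedSpace ℝ E']
  {H' : Type*} [TopologicalSpace H'] {I' : ModelWithCorners ℝ E' H'}
  {N : Type*} [TopologicalSpace N] [ChartedSpace H' N]

theorem vfApply_comp {π : M → N} {f : N → ℝ} {m : M}
    (hπ : MDifferentiableAt I I' π m) (hf : MDifferentiableAt I' 𝓘(ℝ, ℝ) f (π m))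
    (X : ∀ m : M, TangentSpace I m) :
    vfApply I X (f ∘ π) m = mfderiv I' 𝓘(ℝ, ℝ) f (π m) (mfderiv I I' π m (X m)) :=
  mfderiv_comp_apply m hf hπ (X m)

theorem vfApply_comp_eq_zero_of_isVerticalVF [IsManifold I (⊤ : ℕ∞) M]
    [IsManifold I' (⊤ : ℕ∞) N] {π : M → N} (hπ : ContMDiff I I' (⊤ : ℕ∞) π)
    {X : ∀ m : M, TangentSpace I m} (hX : IsVerticalVF I I' π X)
    {f : N → ℝ} (hf : ContMDiff I' 𝓘(ℝ, ℝ) (⊤ : ℕ∞) f) :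
    vfApply I X (f ∘ π) = 0 := by
  funext m
  rw [vfApply_comp (hπ.mdifferentiableAt (by simp)) (hf.mdifferentiableAt (by simp)), hX m,
    map_zero]
  rfl

end VectorFieldCalculus

section TangentSeparation

variable {E : Type*} [NormedAddCommGroup E] [NormedSpace ℝ E] [FiniteDimensional ℝ E]
  {H : Type*} [TopologicalSpace H] {I : ModelWithCorners ℝ E H}
  {M : Type*} [TopologicalSpace M] [ChartedSpace H M] [IsManifold I (⊤ : ℕ∞) M]
  [CompactSpace M] [T2Space M]

/-- Test against the coordinates of a Whitney embedding, whose differential is injective. -/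
theorem eq_zero_of_forall_mfderiv_eq_zero {m : M} {v : TangentSpace I m}
    (h : ∀ f : M → ℝ, ContMDiff I 𝓘(ℝ, ℝ) (⊤ : ℕ∞) f → mfderiv I 𝓘(ℝ, ℝ) f m v = 0) :
    v = 0 := by
  obtain ⟨n, e, he, -, hinj⟩ := exists_embedding_euclidean_of_compact (I := I) (M := M)
  refine hinj m ?_
  rw [map_zero]
  refine PiLp.ext fun i => ?_
  let p : EuclideanSpace ℝ (Fin n) →L[ℝ] ℝ := EuclideanSpace.proj i
  have hcoord := h (p ∘ e) (p.contMDiff.comp he)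
  rwa [mfderiv_comp_apply m p.mdifferentiableAt (he.mdifferentiableAt (by simp)),
    ContinuousLinearMap.mfderiv_eq] at hcoord

end TangentSeparation

section Koszul

variable {E : Type*} [NormedAddCommGroup E] [NormedSpace ℝ E]
  {H : Type*} [TopologicalSpace H] {I : ModelWithCorners ℝ E H}
  {M : Type*} [TopologicalSpace M] [ChartedSpace H M] [IsManifold I (⊤ : ℕ∞) M]

theorem RiemannianMetric.g_sub_left (g : RiemannianMetric I M) (m : M)
    (u v w : TangentSpace I m) : g.g m (u - v) w = g.g m u w - g.g m v w := by
  rw [sub_eq_add_neg, ← neg_one_smul ℝ v, g.add_left, g.smul_left]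
  ring

theorem LeviCivita.g_cov_sub_cov {g : RiemannianMetric I M} {lie : LieBracketData I M}
    (cov : LeviCivita g lie) {X Y : ∀ m : M, TangentSpace I m} (hX : IsSmoothVF I X)
    (hY : IsSmoothVF I Y) (Z : ∀ m : M, TangentSpace I m) (m : M) :
    g.g m (cov.cov X Y m) (Z m) - g.g m (cov.cov Y X m) (Z m) =
      g.g m (lie.bracket X Y m) (Z m) := by
  rw [← g.g_sub_left, cov.torsion_free X Y hX hY]

theorem LeviCivita.koszul {g : RiemannianMetric I M} {lie : LieBracketData I M}
    (cov : LeviCivita g lie) {X Y Z : ∀ m : M, TangentSpace I m} (hX : IsSmoothVF I X)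
    (hY : IsSmoothVF I Y) (hZ : IsSmoothVF I Z) (m : M) :
    2 * g.g m (cov.cov X Y m) (Z m) =
      vfApply I X (fun m => g.g m (Y m) (Z m)) m + vfApply I Y (fun m => g.g m (X m) (Z m)) m
        - vfApply I Z (fun m => g.g m (X m) (Y m)) m + g.g m (lie.bracket X Y m) (Z m)
        - g.g m (lie.bracket X Z m) (Y m) - g.g m (lie.bracket Y Z m) (X m) := by
  rw [cov.metric X Y Z hX hY hZ, cov.metric Y X Z hY hX hZ, cov.metric Z X Y hZ hX hY,
    ← cov.g_cov_sub_cov hX hY, ← cov.g_cov_sub_cov hX hZ, ← cov.g_cov_sub_cov hY hZ,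
    g.symm m (Y m), g.symm m (X m) (cov.cov Y Z m), g.symm m (X m) (cov.cov Z Y m)]
  ring

end Koszul

section RiemannianSubmersion

variable {EM : Type*} [NormedAddCommGroup EM] [NormedSpace ℝ EM]
  {HM : Type*} [TopologicalSpace HM] {IM : ModelWithCorners ℝ EM HM}
  {M : Type*} [TopologicalSpace M] [ChartedSpace HM M] [IsManifold IM (⊤ : ℕ∞) M]
  {EB : Type*} [NormedAddCommGroup EB] [NormedSpace ℝ EB]
  {HB : Type*} [TopologicalSpace HB] {IB : ModelWithCorners ℝ EB HB}
  {B : Type*} [TopologicalSpace B] [ChartedSpace HB B] {π : M → B}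

theorem IsVerticalVF.g_eq_zero_of_isHorizontalVF {gM : RiemannianMetric IM M}
    {X V : ∀ m : M, TangentSpace IM m} (hX : IsVerticalVF IM IB π X)
    (hV : IsHorizontalVF IM IB π gM V) (m : M) : gM.g m (X m) (V m) = 0 := by
  rw [gM.symm]
  exact hV m (X m) (hX m)

theorem IsRiemannianSubmersion.g_horizontalLift [IsManifold IB (⊤ : ℕ∞) B]
    {gM : RiemannianMetric IM M} {gB : RiemannianMetric IB B}
    (hπ : IsRiemannianSubmersion IM IB π gM gB)
    {Y Z : ∀ b : B, TangentSpace IB b} {YH ZH : ∀ m : M, TangentSpace IM m}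
    (hYH : IsHorizontalLift IM IB π gM Y YH) (hZH : IsHorizontalLift IM IB π gM Z ZH) :
    (fun m => gM.g m (YH m) (ZH m)) = (fun b => gB.g b (Y b) (Z b)) ∘ π := by
  funext m
  rw [← hπ.isometry m _ _ (hYH.2.1 m) (hZH.2.1 m), hYH.2.2 m, hZH.2.2 m]
  rfl

/-- Tested on a pullback `f ∘ π`, both terms of `[X, Y_H] (f ∘ π) = X (Y f ∘ π) - Y_H (X (f ∘ π))`
vanish. -/
theorem IsVerticalVF.lieBracket [IsManifold IB (⊤ : ℕ∞) B] [CompactSpace B] [T2Space B]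
    [FiniteDimensional ℝ EB]
    (hπ : ContMDiff IM IB (⊤ : ℕ∞) π) (lie : LieBracketData IM M)
    {X : ∀ m : M, TangentSpace IM m} (hXs : IsSmoothVF IM X) (hX : IsVerticalVF IM IB π X)
    {Y : ∀ b : B, TangentSpace IB b} (hYs : IsSmoothVF IB Y)
    {YH : ∀ m : M, TangentSpace IM m} (hYHs : IsSmoothVF IM YH)
    (hYH : ∀ m : M, mfderiv IM IB π m (YH m) = Y (π m)) :
    IsVerticalVF IM IB π (lie.bracket X YH) := by
  intro m
  refine eq_zero_of_forall_mfderiv_eq_zero fun f hf => ?_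
  have hπd : ∀ m', MDifferentiableAt IM IB π m' := fun _ => hπ.mdifferentiableAt (by simp)
  have hfd : ∀ b, MDifferentiableAt IB 𝓘(ℝ, ℝ) f b := fun _ => hf.mdifferentiableAt (by simp)
  have hYHf : vfApply IM YH (f ∘ π) = vfApply IB Y f ∘ π := by
    funext m'
    rw [vfApply_comp (hπd m') (hfd _), hYH m']
    rfl
  have hbracket := lie.apply_eq X YH hXs hYHs (f ∘ π) (hf.comp hπ) m
  rw [vfApply_comp (hπd m) (hfd _), hYHf,
    vfApply_comp_eq_zero_of_isVerticalVF hπ hX (contMDiff_vfApply hYs hf),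
    vfApply_comp_eq_zero_of_isVerticalVF hπ hX hf, vfApply_zero] at hbracket
  simp only [Pi.zero_apply, sub_self] at hbracket
  exact hbracket

end RiemannianSubmersion

section Statement

variable {EM : Type*} [NormedAddCommGroup EM] [NormedSpace ℝ EM]
  {HM : Type*} [TopologicalSpace HM] {IM : ModelWithCorners ℝ EM HM}
  {M : Type*} [TopologicalSpace M] [ChartedSpace HM M] [IsManifold IM (⊤ : ℕ∞) M]
  {EB : Type*} [NormedAddCommGroup EB] [NormedSpace ℝ EB]
  {HB : Type*} [TopologicalSpace HB] {IB : ModelWithCorners ℝ EB HB}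
  {B : Type*} [TopologicalSpace B] [ChartedSpace HB B] [IsManifold IB (⊤ : ℕ∞) B]
  [IM.Boundaryless] [IB.Boundaryless] [CompactSpace M] [CompactSpace B]
  [T2Space M] [T2Space B] [FiniteDimensional ℝ EM] [FiniteDimensional ℝ EB]

theorem two_inner_levi_civita_vertical_horizontal_lifts_general
    (gM : RiemannianMetric IM M) (gB : RiemannianMetric IB B)
    (π : M → B) (hπ : IsRiemannianSubmersion IM IB π gM gB)
    (lieM : LieBracketData IM M)
    (covM : LeviCivita gM lieM)
    (X : ∀ m : M, TangentSpace IM m) (hXsmooth : IsSmoothVF IM X)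
    (hXvert : IsVerticalVF IM IB π X)
    (Y : ∀ b : B, TangentSpace IB b) (hYsmooth : IsSmoothVF IB Y)
    (Z : ∀ b : B, TangentSpace IB b) (hZsmooth : IsSmoothVF IB Z)
    (YH : ∀ m : M, TangentSpace IM m) (hYH : IsHorizontalLift IM IB π gM Y YH)
    (ZH : ∀ m : M, TangentSpace IM m) (hZH : IsHorizontalLift IM IB π gM Z ZH) :
    ∀ m : M, 2 * gM.g m (covM.cov X YH m) (ZH m) =
      -gM.g m (lieM.bracket YH ZH m) (X m) := by
  intro m
  have hXYH : (fun m => gM.g m (X m) (YH m)) = 0 :=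
    funext (hXvert.g_eq_zero_of_isHorizontalVF hYH.2.1)
  have hXZH : (fun m => gM.g m (X m) (ZH m)) = 0 :=
    funext (hXvert.g_eq_zero_of_isHorizontalVF hZH.2.1)
  have hXYHvert := hXvert.lieBracket hπ.smooth lieM hXsmooth hYsmooth hYH.1 hYH.2.2
  have hXZHvert := hXvert.lieBracket hπ.smooth lieM hXsmooth hZsmooth hZH.1 hZH.2.2
  rw [covM.koszul hXsmooth hYH.1 hZH.1, hπ.g_horizontalLift hYH hZH,
    vfApply_comp_eq_zero_of_isVerticalVF hπ.smooth hXvert (gB.smooth Y Z hYsmooth hZsmooth),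
    hXYH, hXZH, vfApply_zero, vfApply_zero,
    hXYHvert.g_eq_zero_of_isHorizontalVF hZH.2.1, hXZHvert.g_eq_zero_of_isHorizontalVF hYH.2.1]
  simp

/-- Let `X` be a smooth vertical vector field on `M` and let `Y_H` and `Z_H` be the
horizontal lifts of smooth vector fields `Y` and `Z` on `B`. Then
`2·⟪∇^M_X Y_H, Z_H⟫ = −⟪[Y_H, Z_H], X⟫` as functions on `M`. -/
theorem two_inner_levi_civita_vertical_horizontal_lifts
    (gM : RiemannianMetric IM M) (gB : RiemannianMetric IB B)
    (π : M → B) (hπ : IsRiemannianSubmersion IM IB π gM gB)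
    (lieM : LieBracketData IM M) (lieB : LieBracketData IB B)
    (covM : LeviCivita gM lieM) (covB : LeviCivita gB lieB)
    (X : ∀ m : M, TangentSpace IM m) (hXsmooth : IsSmoothVF IM X)
    (hXvert : IsVerticalVF IM IB π X)
    (Y : ∀ b : B, TangentSpace IB b) (hYsmooth : IsSmoothVF IB Y)
    (Z : ∀ b : B, TangentSpace IB b) (hZsmooth : IsSmoothVF IB Z)
    (YH : ∀ m : M, TangentSpace IM m) (hYH : IsHorizontalLift IM IB π gM Y YH)
    (ZH : ∀ m : M, TangentSpace IM m) (hZH : IsHorizontalLift IM IB π gM Z ZH) :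
    ∀ m : M, 2 * gM.g m (covM.cov X YH m) (ZH m) =
      -gM.g m (lieM.bracket YH ZH m) (X m) :=
  two_inner_levi_civita_vertical_horizontal_lifts_general gM gB π hπ lieM covM X hXsmooth hXvert Y
    hYsmooth Z hZsmooth YH hYH ZH hZH

end Statement
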